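/- Let C be a finite set of cells, τ a partition on C, and L a set of partitions on C, each finer than τ, containing the trivial partition ⊥ and closed under the partition join. For B finer than τ let cir_L(B) denote the greatest element of {P ∈ L : P ≤ B}. Fix A ∈ L and set L/A := {P/A : P ∈ L, A ≤ P}, a set of partitions on C/A (which contains the trivial partition on C/A and is closed under join), with cir_{L/A} defined analogously on partitions of C/A finer than τ/A. Then for every partition B with A ≤ B ≤ τ, cir_{L/A}(B/A) = cir_L(B)/A. -/

import Mathlib

/-- The quotient partition `B/A` on the quotient set `C/A` (for partitions `A ≤ B` on `C`),
viewed as an equivalence relation on `Quotient A`: two colors of `A` are identified iff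
(any of) their representatives are `B`-related. -/
noncomputable def quotPartition {C : Type*} (A B : Setoid C) : Setoid (Quotient A) :=
  Setoid.comap (Quotient.out : Quotient A → C) B

/-- Let `C` be a finite set of cells, `τ` a partition on `C`, and `L` a
set of partitions on `C`, each finer than `τ`, containing the trivial partition `⊥` and
closed under the partition join `⊔`.  For `B` finer than `τ`, `cir_L(B)` is the greatest
element of `{P ∈ L : P ≤ B}`.  Fix `A ∈ L` and let `L/A := {P/A : P ∈ L, A ≤ P}` (a set of
partitions on `C/A`), with `cir_{L/A}` defined analogously.  Then for every partition `B`
with `A ≤ B ≤ τ`:  `cir_{L/A}(B/A) = cir_L(B)/A`.  (Here `cB` plays the role of `cir_L(B)`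
and `cQ` the role of `cir_{L/A}(B/A)`, each specified by its defining greatest-element
property.) -/
theorem cir_quotient_eq_quotient_cir {C : Type*} [Fintype C]
    (τ : Setoid C) (L : Set (Setoid C))
    (hLτ : ∀ P ∈ L, P ≤ τ)
    (hbot : ⊥ ∈ L)
    (hjoin : ∀ P ∈ L, ∀ Q ∈ L, P ⊔ Q ∈ L)
    (A : Setoid C) (hA : A ∈ L)
    (B : Setoid C) (hAB : A ≤ B) (hBτ : B ≤ τ)
    (cB : Setoid C) (hcB : IsGreatest {P | P ∈ L ∧ P ≤ B} cB)
    (cQ : Setoid (Quotient A))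
    (hcQ : IsGreatest
      {P | P ∈ (fun S => quotPartition A S) '' {P | P ∈ L ∧ A ≤ P} ∧ P ≤ quotPartition A B}
      cQ) :
    cQ = quotPartition A cB := by
  -- basic facts
  have hAcB : A ≤ cB := hcB.2 ⟨hA, hAB⟩
  have hcBL : cB ∈ L := hcB.1.1
  have hcBB : cB ≤ B := hcB.1.2
  have hmono : ∀ P Q : Setoid C, P ≤ Q → quotPartition A P ≤ quotPartition A Q := by
    intro P Q h x y hxy
    exact h hxy
  -- quotPartition A cB is in the candidate set for cQ
  have h1 : quotPartition A cB ≤ cQ := by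
    apply hcQ.2
    exact ⟨⟨cB, ⟨hcBL, hAcB⟩, rfl⟩, hmono _ _ hcBB⟩
  -- conversely
  obtain ⟨⟨P, ⟨hPL, hAP⟩, hPeq0⟩, hcQB⟩ := hcQ.1
  have hPeq : quotPartition A P = cQ := hPeq0
  have hout : ∀ x : C, A.r (Quotient.mk A x).out x := by
    intro x
    exact Quotient.exact (Quotient.out_eq (Quotient.mk A x))
  have hPB : P ≤ B := by
    intro x y hxy
    have h1 : P.r (Quotient.mk A x).out (Quotient.mk A y).out :=
      P.trans (hAP (hout x)) (P.trans hxy (P.symm (hAP (hout y))))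
    have h2 : (quotPartition A P).r (Quotient.mk A x) (Quotient.mk A y) := h1
    have h3 : (quotPartition A B).r (Quotient.mk A x) (Quotient.mk A y) := by
      rw [hPeq] at h2
      exact hcQB h2
    have h4 : B.r (Quotient.mk A x).out (Quotient.mk A y).out := h3
    exact B.trans (B.symm (hAB (hout x))) (B.trans h4 (hAB (hout y)))
  have hPcB : P ≤ cB := hcB.2 ⟨hPL, hPB⟩
  have h2 : cQ ≤ quotPartition A cB := by
    rw [← hPeq]
    exact hmono _ _ hPcB
  exact le_antisymm h2 h1
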